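/- With the same notation, |(∂_v − t∂_x)² Γ_a(t,x,y;s)| ≤ (c/(t−s)) Γ_{a+ε}(t,x,y;s) for all 0 ≤ s < t ≤ T and x, y ∈ ℝ, using the identity (∂_v − t∂_x)² Γ_a = (4/(a(t−s)))·((3x + y(t+2s))²/(a(t−s)³) − 1)·Γ_a. -/

import Mathlib

/-- The fundamental solution of the transformed Langevin operator
`L_a = (a/2)(∂_v − t∂_x)² − ∂_t`. -/
noncomputable def GammaKol (a s t x y : ℝ) : ℝ :=
  Real.sqrt 3 / (a * Real.pi * (t - s) ^ 2) *
    Real.exp (-(2 / (a * (t - s) ^ 3)) *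
      (3 * x ^ 2 + 3 * x * y * (t + s) + y ^ 2 * (t ^ 2 + t * s + s ^ 2)))

/-- The vector field `V̄_t = ∂_v − t∂_x` acting on functions of `(x,y)`. -/
noncomputable def Vbar (t : ℝ) (f : ℝ → ℝ → ℝ) : ℝ → ℝ → ℝ :=
  fun x y => deriv (fun y' => f x y') y - t * deriv (fun x' => f x' y) x

lemma hasDerivAt_quadExp (C c1 c2 c3 v : ℝ) :
    HasDerivAt (fun w : ℝ => C * Real.exp (c1 + c2 * w + c3 * w ^ 2))
      ((c2 + 2 * c3 * v) * (C * Real.exp (c1 + c2 * v + c3 * v ^ 2))) v := by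
  have h1 : HasDerivAt (fun w : ℝ => c2 * w) c2 v := by
    simpa using (hasDerivAt_id v).const_mul c2
  have h2 : HasDerivAt (fun w : ℝ => c3 * w ^ 2) (c3 * (2 * v)) v := by
    simpa using (hasDerivAt_pow 2 v).const_mul c3
  have h : HasDerivAt (fun w : ℝ => c1 + c2 * w + c3 * w ^ 2) (c2 + 2 * c3 * v) v := by
    have := ((hasDerivAt_const v c1).add h1).add h2
    exact this.congr_deriv (by ring)
  have := h.exp.const_mul C
  exact this.congr_deriv (by ring)

lemma gammaKol_hasDerivAt_y (a s t x y : ℝ) :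
    HasDerivAt (fun y' => GammaKol a s t x y')
      ((-(2 / (a * (t - s) ^ 3)) * (3 * x * (t + s) + 2 * y * (t ^ 2 + t * s + s ^ 2))) *
        GammaKol a s t x y) y := by
  have hfun : (fun y' => GammaKol a s t x y')
      = (fun y' : ℝ => (Real.sqrt 3 / (a * Real.pi * (t - s) ^ 2)) *
          Real.exp ((-(2 / (a * (t - s) ^ 3)) * (3 * x ^ 2))
            + (-(2 / (a * (t - s) ^ 3)) * (3 * x * (t + s))) * y'
            + (-(2 / (a * (t - s) ^ 3)) * (t ^ 2 + t * s + s ^ 2)) * y' ^ 2)) := by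
    funext y'
    unfold GammaKol
    congr 1
    congr 1
    ring
  rw [hfun]
  have := hasDerivAt_quadExp (Real.sqrt 3 / (a * Real.pi * (t - s) ^ 2))
    (-(2 / (a * (t - s) ^ 3)) * (3 * x ^ 2))
    (-(2 / (a * (t - s) ^ 3)) * (3 * x * (t + s)))
    (-(2 / (a * (t - s) ^ 3)) * (t ^ 2 + t * s + s ^ 2)) y
  convert this using 1
  unfold GammaKol
  rw [show (-(2 / (a * (t - s) ^ 3)) * (3 * x ^ 2 + 3 * x * y * (t + s) + y ^ 2 * (t ^ 2 + t * s + s ^ 2)))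
      = (-(2 / (a * (t - s) ^ 3)) * (3 * x ^ 2))
        + (-(2 / (a * (t - s) ^ 3)) * (3 * x * (t + s))) * y
        + (-(2 / (a * (t - s) ^ 3)) * (t ^ 2 + t * s + s ^ 2)) * y ^ 2 from by ring]
  ring

lemma gammaKol_hasDerivAt_x (a s t x y : ℝ) :
    HasDerivAt (fun x' => GammaKol a s t x' y)
      ((-(2 / (a * (t - s) ^ 3)) * (6 * x + 3 * y * (t + s))) * GammaKol a s t x y) x := by
  have hfun : (fun x' => GammaKol a s t x' y)
      = (fun x' : ℝ => (Real.sqrt 3 / (a * Real.pi * (t - s) ^ 2)) *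
          Real.exp ((-(2 / (a * (t - s) ^ 3)) * (y ^ 2 * (t ^ 2 + t * s + s ^ 2)))
            + (-(2 / (a * (t - s) ^ 3)) * (3 * y * (t + s))) * x'
            + (-(2 / (a * (t - s) ^ 3)) * 3) * x' ^ 2)) := by
    funext x'
    unfold GammaKol
    congr 1
    congr 1
    ring
  rw [hfun]
  have := hasDerivAt_quadExp (Real.sqrt 3 / (a * Real.pi * (t - s) ^ 2))
    (-(2 / (a * (t - s) ^ 3)) * (y ^ 2 * (t ^ 2 + t * s + s ^ 2)))
    (-(2 / (a * (t - s) ^ 3)) * (3 * y * (t + s)))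
    (-(2 / (a * (t - s) ^ 3)) * 3) x
  convert this using 1
  unfold GammaKol
  rw [show (-(2 / (a * (t - s) ^ 3)) * (3 * x ^ 2 + 3 * x * y * (t + s) + y ^ 2 * (t ^ 2 + t * s + s ^ 2)))
      = (-(2 / (a * (t - s) ^ 3)) * (y ^ 2 * (t ^ 2 + t * s + s ^ 2)))
        + (-(2 / (a * (t - s) ^ 3)) * (3 * y * (t + s))) * x
        + (-(2 / (a * (t - s) ^ 3)) * 3) * x ^ 2 from by ring]
  ring

lemma vbar_gammaKol (a s t x y : ℝ) :
    Vbar t (fun x' y' => GammaKol a s t x' y') x y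
      = (2 / (a * (t - s) ^ 3)) * (t - s) * (3 * x + y * (t + 2 * s)) * GammaKol a s t x y := by
  unfold Vbar
  rw [(gammaKol_hasDerivAt_y a s t x y).deriv, (gammaKol_hasDerivAt_x a s t x y).deriv]
  ring

lemma vbar2_gammaKol (a s t x y : ℝ) :
    Vbar t (Vbar t (fun x' y' => GammaKol a s t x' y')) x y
      = ((2 / (a * (t - s) ^ 3)) ^ 2 * (t - s) ^ 2 * (3 * x + y * (t + 2 * s)) ^ 2
          - 2 * (2 / (a * (t - s) ^ 3)) * (t - s) ^ 2) * GammaKol a s t x y := by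
  have hg : Vbar t (fun x' y' => GammaKol a s t x' y')
      = fun x' y' => (2 / (a * (t - s) ^ 3)) * (t - s) * (3 * x' + y' * (t + 2 * s))
          * GammaKol a s t x' y' := by
    funext x' y'; exact vbar_gammaKol a s t x' y'
  rw [hg]
  unfold Vbar
  have hliny : HasDerivAt (fun y' : ℝ => (2 / (a * (t - s) ^ 3)) * (t - s) * (3 * x + y' * (t + 2 * s)))
      ((2 / (a * (t - s) ^ 3)) * (t - s) * (t + 2 * s)) y := by
    have h0 : HasDerivAt (fun y' : ℝ => y' * (t + 2 * s)) (t + 2 * s) y := by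
      simpa using (hasDerivAt_id y).mul_const (t + 2 * s)
    have := ((h0.const_add (3 * x)).const_mul ((2 / (a * (t - s) ^ 3)) * (t - s)))
    convert this using 1
  have hlinx : HasDerivAt (fun x' : ℝ => (2 / (a * (t - s) ^ 3)) * (t - s) * (3 * x' + y * (t + 2 * s)))
      ((2 / (a * (t - s) ^ 3)) * (t - s) * 3) x := by
    have h0 : HasDerivAt (fun x' : ℝ => 3 * x') 3 x := by
      simpa using (hasDerivAt_id x).const_mul 3
    have := ((h0.add_const (y * (t + 2 * s))).const_mul ((2 / (a * (t - s) ^ 3)) * (t - s)))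
    convert this using 1
  have hy := hliny.mul (gammaKol_hasDerivAt_y a s t x y)
  have hx := hlinx.mul (gammaKol_hasDerivAt_x a s t x y)
  simp only [Pi.mul_def] at hy hx
  beta_reduce
  rw [hy.deriv, hx.deriv]
  ring

set_option maxHeartbeats 1000000 in
/-- Second-order Gaussian estimate: for every `ε > 0` there is `c > 0` with
`|(∂_v − t∂_x)² Γ_a| ≤ (c/(t−s)) Γ_{a+ε}` for `0 ≤ s < t ≤ T`. -/
theorem second_order_estimate_GammaKol (a ε T : ℝ) (ha : 0 < a) (hε : 0 < ε) (hT : 0 < T) :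
    ∃ c : ℝ, 0 < c ∧
      ∀ s t x y : ℝ, 0 ≤ s → s < t → t ≤ T →
        |Vbar t (Vbar t (fun x' y' => GammaKol a s t x' y')) x y|
        ≤ c / (t - s) * GammaKol (a + ε) s t x y := by
  refine ⟨2 * (a + ε) / a ^ 2 * (4 * (a + ε) / ε + 2), by positivity, ?_⟩
  intro s t x y hs hst htT
  have hτ : 0 < t - s := sub_pos.mpr hst
  have ha' : a ≠ 0 := ha.ne'
  have hε' : ε ≠ 0 := hε.ne'
  have haε : (0:ℝ) < a + ε := by linarith
  have haε' : a + ε ≠ 0 := haε.ne'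
  have hτ' : t - s ≠ 0 := hτ.ne'
  rw [vbar2_gammaKol]
  simp only [GammaKol]
  set u := 3 * x + y * (t + 2 * s) with hu_def
  set Q := 3 * x ^ 2 + 3 * x * y * (t + s) + y ^ 2 * (t ^ 2 + t * s + s ^ 2) with hQ_def
  set c0 := 2 / (a * (t - s) ^ 3) with hc0_def
  set c0' := 2 / ((a + ε) * (t - s) ^ 3) with hc0'_def
  set Ca := Real.sqrt 3 / (a * Real.pi * (t - s) ^ 2) with hCa_def
  set C' := Real.sqrt 3 / ((a + ε) * Real.pi * (t - s) ^ 2) with hC'_def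
  set D := 2 * ε / (a * (a + ε) * (t - s) ^ 3) with hD_def
  have hQ : 0 ≤ Q := by
    rw [hQ_def]; nlinarith [sq_nonneg (2 * x + y * (t + s)), sq_nonneg (y * (t - s))]
  have hu : u ^ 2 ≤ 4 * Q := by
    rw [hu_def, hQ_def]; nlinarith [sq_nonneg (x + y * t)]
  have hc0 : 0 < c0 := by rw [hc0_def]; positivity
  have hD : 0 < D := by rw [hD_def]; positivity
  have hz : 0 ≤ D * Q := mul_nonneg hD.le hQ
  have hsplit : -c0 * Q = -c0' * Q + -(D * Q) := by
    rw [hc0_def, hc0'_def, hD_def]; field_simp; ring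
  have hc0Q : c0 * Q = (a + ε) / ε * (D * Q) := by
    rw [hc0_def, hD_def]; field_simp
  rw [hsplit, Real.exp_add]
  set E := Real.exp (-c0' * Q) with hE_def
  set F := Real.exp (-(D * Q)) with hF_def
  have hE : 0 < E := Real.exp_pos _
  have hF : 0 < F := Real.exp_pos _
  have hF1 : F ≤ 1 := by rw [hF_def]; exact Real.exp_le_one_iff.mpr (by linarith)
  have hF2 : D * Q * F ≤ 1 := by
    have h1 : D * Q ≤ Real.exp (D * Q) := by linarith [Real.add_one_le_exp (D * Q)]
    have h2 : D * Q * F ≤ Real.exp (D * Q) * F :=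
      mul_le_mul_of_nonneg_right h1 hF.le
    have h3 : Real.exp (D * Q) * F = 1 := by
      rw [hF_def, ← Real.exp_add]; simp
    linarith
  have hCa_pos : 0 < Ca := by rw [hCa_def]; positivity
  have hΓ : 0 < Ca * (E * F) := by positivity
  have hCaE : 0 < Ca * E := by positivity
  calc |(c0 ^ 2 * (t - s) ^ 2 * u ^ 2 - 2 * c0 * (t - s) ^ 2) * (Ca * (E * F))|
      = |c0 ^ 2 * (t - s) ^ 2 * u ^ 2 - 2 * c0 * (t - s) ^ 2| * (Ca * (E * F)) := by
        rw [abs_mul, abs_of_pos hΓ]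
    _ ≤ (c0 ^ 2 * (t - s) ^ 2 * u ^ 2 + 2 * c0 * (t - s) ^ 2) * (Ca * (E * F)) := by
        have h1 : 0 ≤ c0 ^ 2 * (t - s) ^ 2 * u ^ 2 := by positivity
        have h2 : 0 ≤ 2 * c0 * (t - s) ^ 2 := by positivity
        exact mul_le_mul_of_nonneg_right
          (abs_le.mpr ⟨by linarith, by linarith⟩) hΓ.le
    _ ≤ (4 * c0 ^ 2 * (t - s) ^ 2 * Q + 2 * c0 * (t - s) ^ 2) * (Ca * (E * F)) := by
        apply mul_le_mul_of_nonneg_right _ hΓ.le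
        nlinarith [mul_le_mul_of_nonneg_left hu (show (0:ℝ) ≤ c0 ^ 2 * (t - s) ^ 2 by positivity)]
    _ = Ca * E * (4 * c0 * (t - s) ^ 2 * ((a + ε) / ε) * (D * Q * F)
          + 2 * c0 * (t - s) ^ 2 * F) := by
        have key : 4 * c0 ^ 2 * (t - s) ^ 2 * Q
            = 4 * c0 * (t - s) ^ 2 * ((a + ε) / ε * (D * Q)) := by
          linear_combination (4 * c0 * (t - s) ^ 2) * hc0Q
        linear_combination (Ca * (E * F)) * key
    _ ≤ Ca * E * (4 * c0 * (t - s) ^ 2 * ((a + ε) / ε) * 1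
          + 2 * c0 * (t - s) ^ 2 * 1) := by
        apply mul_le_mul_of_nonneg_left _ hCaE.le
        have hA : (0:ℝ) ≤ 4 * c0 * (t - s) ^ 2 * ((a + ε) / ε) := by positivity
        have hB : (0:ℝ) ≤ 2 * c0 * (t - s) ^ 2 := by positivity
        exact add_le_add (mul_le_mul_of_nonneg_left hF2 hA)
          (mul_le_mul_of_nonneg_left hF1 hB)
    _ = 2 * (a + ε) / a ^ 2 * (4 * (a + ε) / ε + 2) / (t - s) * (C' * E) := by
        rw [hCa_def, hC'_def, hc0_def]
        have hπ : Real.pi ≠ 0 := Real.pi_ne_zero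
        field_simp
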